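/- Under the hypotheses of the generalized Nehari theorem — E a real reflexive Banach space, Φ(x) = ½‖x‖² - I(x) with I ∈ C¹ weakly continuous, I(x)/‖x‖² → 0 as x → 0, I(sx)/s² → +∞ uniformly on weakly compact subsets of E∖{0} as s → +∞, and s ↦ I'(sx)x/s non-decreasing for x ≠ 0 — the Nehari set 𝒩 = {x ≠ 0 : Φ'(x)x = 0} is nonempty, bounded away from the origin, and its complement E ∖ 𝒩 has exactly two path-connected components: the set of x with segment [0,x] disjoint from 𝒩, and the set of x with [0,x] meeting 𝒩. -/

import Mathlib

open Filter Topology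

section NehariAux

variable {E : Type*} [NormedAddCommGroup E] [NormedSpace ℝ E]
variable {I : E → ℝ} {I' : E → E →L[ℝ] ℝ}

/-- Derivative of `I` along a ray. -/
lemma nehari_aux_deriv (hI : ∀ x, HasFDerivAt I (I' x) x) (z : E) (t : ℝ) :
    HasDerivAt (fun s : ℝ => I (s • z)) (I' (t • z) z) t := by
  have h1 : HasDerivAt (fun s : ℝ => s • z) ((1 : ℝ) • z) t :=
    (hasDerivAt_id t).smul_const z
  have := (hI (t • z)).comp_hasDerivAt t h1
  simpa [Function.comp_def] using this

lemma nehari_aux_contI (hI : ∀ x, HasFDerivAt I (I' x) x) : Continuous I :=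
  continuous_iff_continuousAt.2 fun x => (hI x).continuousAt

/-- `I 0 = 0`. -/
lemma nehari_aux_Izero [Nontrivial E] (hI : ∀ x, HasFDerivAt I (I' x) x)
    (hzero : Tendsto (fun x => I x / ‖x‖ ^ 2) (𝓝[≠] (0 : E)) (𝓝 0)) : I 0 = 0 := by
  haveI : (𝓝[≠] (0 : E)).NeBot := Module.punctured_nhds_neBot ℝ E 0
  have hc : Tendsto I (𝓝[≠] (0 : E)) (𝓝 (I 0)) :=
    ((nehari_aux_contI hI).tendsto 0).mono_left nhdsWithin_le_nhds
  have hn : Tendsto (fun x : E => ‖x‖ ^ 2) (𝓝[≠] (0 : E)) (𝓝 (0 : ℝ)) := by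
    have h := ((continuous_norm.pow 2).tendsto (0 : E)).mono_left
      (nhdsWithin_le_nhds (s := {(0 : E)}ᶜ))
    simp at h; exact h
  have h2 : Tendsto (fun x : E => I x / ‖x‖ ^ 2 * ‖x‖ ^ 2) (𝓝[≠] (0 : E)) (𝓝 (0 * 0)) :=
    hzero.mul hn
  have h3 : (fun x : E => I x / ‖x‖ ^ 2 * ‖x‖ ^ 2) =ᶠ[𝓝[≠] (0 : E)] I := by
    filter_upwards [self_mem_nhdsWithin] with x hx
    have hx0 : ‖x‖ ^ 2 ≠ 0 := pow_ne_zero _ (norm_ne_zero_iff.2 hx)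
    exact div_mul_cancel₀ _ hx0
  have h4 : Tendsto I (𝓝[≠] (0 : E)) (𝓝 (0 : ℝ)) := by
    simpa using h2.congr' h3
  exact tendsto_nhds_unique hc h4

/-- Cross-multiplied monotonicity of `s ↦ I'(sz)z/s`. -/
lemma nehari_aux_cross
    (hmono : ∀ x : E, x ≠ 0 → MonotoneOn (fun s : ℝ => I' (s • x) x / s) (Set.Ioi 0))
    {z : E} (hz : z ≠ 0) {a b : ℝ} (ha : 0 < a) (hab : a ≤ b) :
    I' (a • z) z * b ≤ I' (b • z) z * a := by
  have hb : 0 < b := lt_of_lt_of_le ha hab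
  have h := hmono z hz (Set.mem_Ioi.2 ha) (Set.mem_Ioi.2 hb) hab
  rw [div_le_div_iff₀ ha hb] at h
  linarith

/-- If `I'(tz)z ≤ tc` on `(a,b)` then `I(bz) - I(az) ≤ (b²-a²)/2 · c`. -/
lemma nehari_aux_upper (hI : ∀ x, HasFDerivAt I (I' x) x) (z : E) (c : ℝ) {a b : ℝ}
    (hab : a ≤ b) (hbd : ∀ t ∈ Set.Ioo a b, I' (t • z) z ≤ t * c) :
    I (b • z) - I (a • z) ≤ (b ^ 2 - a ^ 2) / 2 * c := by
  set w : ℝ → ℝ := fun t => t ^ 2 / 2 * c - I (t • z) with hw_def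
  have hw : ∀ t : ℝ, HasDerivAt w (t * c - I' (t • z) z) t := by
    intro t
    have h1 : HasDerivAt (fun t : ℝ => t ^ 2 / 2 * c) (t * c) t := by
      have h := ((hasDerivAt_pow 2 t).div_const 2).mul_const c
      exact h.congr_deriv (by norm_num)
    exact h1.sub (nehari_aux_deriv hI z t)
  have hdiff : Differentiable ℝ w := fun t => (hw t).differentiableAt
  have hmono' : MonotoneOn w (Set.Icc a b) := by
    apply monotoneOn_of_deriv_nonneg (convex_Icc a b) hdiff.continuous.continuousOn
      hdiff.differentiableOn
    intro t ht
    rw [interior_Icc] at ht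
    rw [(hw t).deriv]
    have := hbd t ht
    linarith
  have h := hmono' (Set.left_mem_Icc.2 hab) (Set.right_mem_Icc.2 hab) hab
  simp only [hw_def] at h
  nlinarith [h]

/-- If `tc ≤ I'(tz)z` on `(a,b)` then `(b²-a²)/2 · c ≤ I(bz) - I(az)`. -/
lemma nehari_aux_lower (hI : ∀ x, HasFDerivAt I (I' x) x) (z : E) (c : ℝ) {a b : ℝ}
    (hab : a ≤ b) (hbd : ∀ t ∈ Set.Ioo a b, t * c ≤ I' (t • z) z) :
    (b ^ 2 - a ^ 2) / 2 * c ≤ I (b • z) - I (a • z) := by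
  have h := nehari_aux_upper (I := fun x => -I x) (I' := fun x => -(I' x))
    (fun x => (hI x).neg) z (-c) hab ?_
  · nlinarith [h]
  · intro t ht
    have := hbd t ht
    simp only [ContinuousLinearMap.neg_apply]
    linarith

/-- Near the origin the Nehari functional is positive. -/
lemma nehari_aux_small [Nontrivial E] (hI : ∀ x, HasFDerivAt I (I' x) x)
    (hzero : Tendsto (fun x => I x / ‖x‖ ^ 2) (𝓝[≠] (0 : E)) (𝓝 0))
    (hmono : ∀ x : E, x ≠ 0 → MonotoneOn (fun s : ℝ => I' (s • x) x / s) (Set.Ioi 0)) :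
    ∃ d > 0, ∀ z : E, z ≠ 0 → ‖z‖ < d → I' z z < ‖z‖ ^ 2 := by
  obtain ⟨δ, hδ, hδ2⟩ := Metric.tendsto_nhdsWithin_nhds.mp hzero (1/8) (by norm_num)
  have key : ∀ y : E, y ≠ 0 → ‖y‖ < δ → |I y| < ‖y‖ ^ 2 / 8 := by
    intro y hy hyδ
    have h := hδ2 (x := y) hy (by simpa [dist_eq_norm] using hyδ)
    have hy2 : (0 : ℝ) < ‖y‖ ^ 2 := pow_pos (norm_pos_iff.2 hy) 2
    rw [Real.dist_eq, sub_zero, abs_div, abs_of_pos hy2, div_lt_iff₀ hy2] at h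
    linarith
  refine ⟨δ / 2, by linarith, ?_⟩
  intro z hz hzδ
  by_contra hcon
  push_neg at hcon
  -- hcon : ‖z‖ ^ 2 ≤ I' z z
  have hz0 : (0 : ℝ) < ‖z‖ := norm_pos_iff.2 hz
  -- Mean value theorem on [1,2]
  obtain ⟨c, hc, hceq⟩ := exists_hasDerivAt_eq_slope (fun t : ℝ => I (t • z))
    (fun t => I' (t • z) z) (by norm_num : (1 : ℝ) < 2)
    ((Differentiable.continuous (fun t => (nehari_aux_deriv hI z t).differentiableAt)).continuousOn)
    (fun t _ => nehari_aux_deriv hI z t)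
  have hc1 : (1 : ℝ) < c := hc.1
  have hcross := nehari_aux_cross hmono hz (a := 1) (b := c) one_pos (le_of_lt hc1)
  rw [one_smul, mul_one] at hcross
  -- hcross : I' z z * c ≤ I' (c • z) z
  have hbig : ‖z‖ ^ 2 ≤ I' (c • z) z := by nlinarith
  have h2z : |I ((2 : ℝ) • z)| < ‖z‖ ^ 2 / 2 := by
    have h2ne : (2 : ℝ) • z ≠ 0 := smul_ne_zero two_ne_zero hz
    have h2n : ‖(2 : ℝ) • z‖ = 2 * ‖z‖ := by
      rw [norm_smul]; simp [abs_of_pos (by norm_num : (0:ℝ) < 2)]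
    have := key ((2 : ℝ) • z) h2ne (by rw [h2n]; linarith)
    rw [h2n] at this
    nlinarith
  have h1z : |I z| < ‖z‖ ^ 2 / 8 := key z hz (by linarith)
  have heq : I ((2 : ℝ) • z) - I ((1 : ℝ) • z) = I' (c • z) z := by
    rw [hceq]; norm_num
  rw [one_smul] at heq
  have ha := abs_lt.1 h2z
  have hb := abs_lt.1 h1z
  nlinarith

/-- On every ray the quotient `I'(tz)z/t` eventually exceeds `‖z‖²`. -/
lemma nehari_aux_raybig (hI : ∀ x, HasFDerivAt I (I' x) x)
    (hsup : ∀ K : Set E, K ⊆ {(0 : E)}ᶜ → IsCompact (toWeakSpace ℝ E '' K) →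
      ∀ M : ℝ, ∃ s₀ : ℝ, ∀ s : ℝ, s₀ ≤ s → ∀ x ∈ K, M ≤ I (s • x) / s ^ 2)
    (hIz : I 0 = 0) {z : E} (hz : z ≠ 0) :
    ∃ t > 0, ‖z‖ ^ 2 * t < I' (t • z) z := by
  by_contra hcon
  push_neg at hcon
  have hKc : IsCompact (toWeakSpace ℝ E '' {z}) := by
    rw [Set.image_singleton]; exact isCompact_singleton
  obtain ⟨s₀, hs₀⟩ := hsup {z} (Set.singleton_subset_iff.2 (by simpa [eq_comm] using hz)) hKc (‖z‖ ^ 2)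
  set s : ℝ := max s₀ 1 with hs_def
  have hs1 : (1 : ℝ) ≤ s := le_max_right _ _
  have hspos : (0 : ℝ) < s := lt_of_lt_of_le one_pos hs1
  have hupper := nehari_aux_upper hI z (‖z‖ ^ 2) (a := 0) (b := s) (le_of_lt hspos) ?_
  · have hlow := hs₀ s (le_max_left _ _) z rfl
    have hs2 : (0 : ℝ) < s ^ 2 := by positivity
    rw [le_div_iff₀ hs2] at hlow
    have hz0 : (0 : ℝ) < ‖z‖ := norm_pos_iff.2 hz
    rw [zero_smul, hIz] at hupper
    nlinarith [mul_pos hs2 (pow_pos hz0 2)]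
  · intro t ht
    have h := hcon t ht.1
    rw [mul_comm]; exact h

/-- Existence of a Nehari point inside `(0,b)` when the ray is superlinear at `b`. -/
lemma nehari_aux_pt [Nontrivial E] (hI : ∀ x, HasFDerivAt I (I' x) x)
    (hzero : Tendsto (fun x => I x / ‖x‖ ^ 2) (𝓝[≠] (0 : E)) (𝓝 0))
    (hmono : ∀ x : E, x ≠ 0 → MonotoneOn (fun s : ℝ => I' (s • x) x / s) (Set.Ioi 0))
    {z : E} (hz : z ≠ 0) {b : ℝ} (hb : 0 < b)
    (hbig : ‖z‖ ^ 2 * b < I' (b • z) z) :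
    ∃ s ∈ Set.Ioo (0 : ℝ) b, I' (s • z) z = ‖z‖ ^ 2 * s := by
  obtain ⟨d, hd, hsmall⟩ := nehari_aux_small hI hzero hmono
  have hz0 : (0 : ℝ) < ‖z‖ := norm_pos_iff.2 hz
  set a : ℝ := min (b / 2) (d / (2 * ‖z‖)) with ha_def
  have ha : 0 < a := lt_min (by linarith) (by positivity)
  have hab : a < b := lt_of_le_of_lt (min_le_left _ _) (by linarith)
  have hsm : I' (a • z) z < ‖z‖ ^ 2 * a := by
    have h1 : ‖a • z‖ < d := by
      rw [norm_smul, Real.norm_eq_abs, abs_of_pos ha]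
      have h2 : a ≤ d / (2 * ‖z‖) := min_le_right _ _
      have h3 : a * ‖z‖ ≤ d / (2 * ‖z‖) * ‖z‖ := by nlinarith
      have h4 : d / (2 * ‖z‖) * ‖z‖ = d / 2 := by field_simp
      linarith
    have h2 := hsmall (a • z) (smul_ne_zero (ne_of_gt ha) hz) h1
    rw [map_smul, smul_eq_mul, norm_smul, Real.norm_eq_abs, abs_of_pos ha] at h2
    -- h2 : a * I' (a • z) z < (a * ‖z‖) ^ 2
    nlinarith
  -- Darboux for g t = I (t z) - t²/2 ‖z‖², g' t = I'(tz)z - t ‖z‖²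
  have hg : ∀ t ∈ Set.Icc a b, HasDerivWithinAt (fun t : ℝ => I (t • z) - t ^ 2 / 2 * ‖z‖ ^ 2)
      (I' (t • z) z - t * ‖z‖ ^ 2) (Set.Icc a b) t := by
    intro t _
    have h1 : HasDerivAt (fun t : ℝ => t ^ 2 / 2 * ‖z‖ ^ 2) (t * ‖z‖ ^ 2) t := by
      have h := ((hasDerivAt_pow 2 t).div_const 2).mul_const (‖z‖ ^ 2)
      exact h.congr_deriv (by norm_num)
    exact ((nehari_aux_deriv hI z t).sub h1).hasDerivWithinAt
  have hda : I' (a • z) z - a * ‖z‖ ^ 2 < 0 := by nlinarith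
  have hdb : (0 : ℝ) < I' (b • z) z - b * ‖z‖ ^ 2 := by nlinarith
  have hdar := exists_hasDerivWithinAt_eq_of_gt_of_lt (le_of_lt hab) hg hda hdb
  obtain ⟨s, hs, hseq⟩ := hdar
  refine ⟨s, ⟨lt_trans ha hs.1, hs.2⟩, ?_⟩
  have : I' (s • z) z - s * ‖z‖ ^ 2 = 0 := hseq
  linarith

end NehariAux

set_option maxHeartbeats 2000000

/-- Topology of the Nehari set: under conditions (i)-(iv) of Theorem 2.1, the
Nehari set `𝒩 = {x ≠ 0 : ‖x‖² - I'(x)x = 0}` is nonempty, bounded away from the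
origin, and its complement consists of exactly the two path-connected components
`Ω₁` (segment `[0,x]` misses `𝒩`) and `Ω₂` (segment `[0,x]` meets `𝒩`), with no
path in the complement joining them. -/
theorem stmt_13 (E : Type*) [NormedAddCommGroup E] [NormedSpace ℝ E] [Nontrivial E]
    (hdim : 2 ≤ Module.rank ℝ E)
    (hrefl : Function.Surjective (NormedSpace.inclusionInDoubleDual ℝ E))
    (I : E → ℝ) (I' : E → E →L[ℝ] ℝ) (hI : ∀ x, HasFDerivAt I (I' x) x)
    (hwc : ∀ (x : ℕ → E) (x₀ : E),
      (∀ f : E →L[ℝ] ℝ, Tendsto (fun n => f (x n)) atTop (𝓝 (f x₀))) →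
      Tendsto (fun n => I (x n)) atTop (𝓝 (I x₀)))
    (hzero : Tendsto (fun x => I x / ‖x‖ ^ 2) (𝓝[≠] (0 : E)) (𝓝 0))
    (hsup : ∀ K : Set E, K ⊆ {(0 : E)}ᶜ → IsCompact (toWeakSpace ℝ E '' K) →
      ∀ M : ℝ, ∃ s₀ : ℝ, ∀ s : ℝ, s₀ ≤ s → ∀ x ∈ K, M ≤ I (s • x) / s ^ 2)
    (hmono : ∀ x : E, x ≠ 0 →
      MonotoneOn (fun s : ℝ => I' (s • x) x / s) (Set.Ioi 0)) :
    {x : E | x ≠ 0 ∧ ‖x‖ ^ 2 - I' x x = 0}.Nonempty ∧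
    (∃ d > 0, ∀ x ∈ {x : E | x ≠ 0 ∧ ‖x‖ ^ 2 - I' x x = 0}, d ≤ ‖x‖) ∧
    ({x : E | x ∉ {x : E | x ≠ 0 ∧ ‖x‖ ^ 2 - I' x x = 0} ∧
        ∀ s ∈ Set.Icc (0:ℝ) 1, s • x ∉ {x : E | x ≠ 0 ∧ ‖x‖ ^ 2 - I' x x = 0}} ∪
      {x : E | x ∉ {x : E | x ≠ 0 ∧ ‖x‖ ^ 2 - I' x x = 0} ∧
        ∃ s ∈ Set.Icc (0:ℝ) 1, s • x ∈ {x : E | x ≠ 0 ∧ ‖x‖ ^ 2 - I' x x = 0}}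
      = {x : E | x ≠ 0 ∧ ‖x‖ ^ 2 - I' x x = 0}ᶜ) ∧
    Disjoint
      {x : E | x ∉ {x : E | x ≠ 0 ∧ ‖x‖ ^ 2 - I' x x = 0} ∧
        ∀ s ∈ Set.Icc (0:ℝ) 1, s • x ∉ {x : E | x ≠ 0 ∧ ‖x‖ ^ 2 - I' x x = 0}}
      {x : E | x ∉ {x : E | x ≠ 0 ∧ ‖x‖ ^ 2 - I' x x = 0} ∧
        ∃ s ∈ Set.Icc (0:ℝ) 1, s • x ∈ {x : E | x ≠ 0 ∧ ‖x‖ ^ 2 - I' x x = 0}} ∧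
    IsPathConnected
      {x : E | x ∉ {x : E | x ≠ 0 ∧ ‖x‖ ^ 2 - I' x x = 0} ∧
        ∀ s ∈ Set.Icc (0:ℝ) 1, s • x ∉ {x : E | x ≠ 0 ∧ ‖x‖ ^ 2 - I' x x = 0}} ∧
    IsPathConnected
      {x : E | x ∉ {x : E | x ≠ 0 ∧ ‖x‖ ^ 2 - I' x x = 0} ∧
        ∃ s ∈ Set.Icc (0:ℝ) 1, s • x ∈ {x : E | x ≠ 0 ∧ ‖x‖ ^ 2 - I' x x = 0}} ∧
    ∀ x ∈ {x : E | x ∉ {x : E | x ≠ 0 ∧ ‖x‖ ^ 2 - I' x x = 0} ∧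
        ∀ s ∈ Set.Icc (0:ℝ) 1, s • x ∉ {x : E | x ≠ 0 ∧ ‖x‖ ^ 2 - I' x x = 0}},
      ∀ y ∈ {x : E | x ∉ {x : E | x ≠ 0 ∧ ‖x‖ ^ 2 - I' x x = 0} ∧
        ∃ s ∈ Set.Icc (0:ℝ) 1, s • x ∈ {x : E | x ≠ 0 ∧ ‖x‖ ^ 2 - I' x x = 0}},
      ¬ JoinedIn {x : E | x ≠ 0 ∧ ‖x‖ ^ 2 - I' x x = 0}ᶜ x y := by
  classical
  set N : Set E := {x : E | x ≠ 0 ∧ ‖x‖ ^ 2 - I' x x = 0} with hN_def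
  set Ω₁ : Set E := {x : E | x ∉ N ∧ ∀ s ∈ Set.Icc (0:ℝ) 1, s • x ∉ N} with hOm1_def
  set Ω₂ : Set E := {x : E | x ∉ N ∧ ∃ s ∈ Set.Icc (0:ℝ) 1, s • x ∈ N} with hOm2_def
  have hmemN : ∀ x : E, x ∈ N ↔ x ≠ 0 ∧ ‖x‖ ^ 2 = I' x x := by
    intro x; simp [hN_def, sub_eq_zero, Set.mem_setOf_eq]
  have hIz : I 0 = 0 := nehari_aux_Izero hI hzero
  obtain ⟨d, hd, hsmall⟩ := nehari_aux_small hI hzero hmono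
  have h0N : (0 : E) ∉ N := by
    rw [hmemN]; rintro ⟨h, -⟩; exact h rfl
  have hsmulN : ∀ (z : E), z ≠ 0 → ∀ (s : ℝ), 0 < s →
      (s • z ∈ N ↔ I' (s • z) z = ‖z‖ ^ 2 * s) := by
    intro z hz s hs
    rw [hmemN]
    constructor
    · rintro ⟨-, h⟩
      rw [norm_smul, map_smul, smul_eq_mul, Real.norm_eq_abs, abs_of_pos hs] at h
      have h2 : s * (‖z‖ ^ 2 * s) = s * (I' (s • z) z) := by rw [← h]; ring
      exact (mul_left_cancel₀ (ne_of_gt hs) h2).symm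
    · intro h
      refine ⟨smul_ne_zero (ne_of_gt hs) hz, ?_⟩
      rw [norm_smul, map_smul, smul_eq_mul, Real.norm_eq_abs, abs_of_pos hs, h]
      ring
  have hOm2char : ∀ x : E, x ∈ Ω₂ ↔ x ≠ 0 ∧ ‖x‖ ^ 2 < I' x x := by
    intro x
    rw [hOm2_def]
    simp only [Set.mem_setOf_eq]
    constructor
    · rintro ⟨hxN, s, hs, hsN⟩
      have hx0 : x ≠ 0 := by
        rintro rfl
        rw [smul_zero] at hsN
        exact h0N hsN
      have hs0 : 0 < s := by
        rcases lt_or_eq_of_le hs.1 with h | h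
        · exact h
        · exfalso; rw [← h, zero_smul] at hsN; exact h0N hsN
      have hs1 : s < 1 := by
        rcases lt_or_eq_of_le hs.2 with h | h
        · exact h
        · exfalso; rw [h, one_smul] at hsN; exact hxN hsN
      have hval : I' (s • x) x = ‖x‖ ^ 2 * s := (hsmulN x hx0 s hs0).1 hsN
      have hcr := nehari_aux_cross hmono hx0 hs0 (le_of_lt hs1)
      rw [one_smul, mul_one, hval] at hcr
      have hle : ‖x‖ ^ 2 ≤ I' x x := le_of_mul_le_mul_right (by linarith) hs0
      refine ⟨hx0, lt_of_le_of_ne hle ?_⟩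
      intro heq
      exact hxN ((hmemN x).2 ⟨hx0, heq⟩)
    · rintro ⟨hx0, hlt⟩
      have hbig : ‖x‖ ^ 2 * 1 < I' ((1:ℝ) • x) x := by rw [one_smul, mul_one]; exact hlt
      obtain ⟨s, hs, hval⟩ := nehari_aux_pt hI hzero hmono hx0 one_pos hbig
      refine ⟨fun hxN => absurd ((hmemN x).1 hxN).2 (ne_of_lt hlt), s,
        ⟨le_of_lt hs.1, le_of_lt hs.2⟩, ?_⟩
      exact (hsmulN x hx0 s hs.1).2 hval
  have hOm2ray : ∀ x : E, x ∈ Ω₂ → ∀ t : ℝ, 1 ≤ t → t • x ∈ Ω₂ := by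
    intro x hx t ht
    obtain ⟨hx0, hlt⟩ := (hOm2char x).1 hx
    have ht0 : 0 < t := lt_of_lt_of_le one_pos ht
    rw [hOm2char]
    refine ⟨smul_ne_zero (ne_of_gt ht0) hx0, ?_⟩
    have hcr := nehari_aux_cross hmono hx0 one_pos ht
    rw [one_smul, mul_one] at hcr
    rw [norm_smul, map_smul, smul_eq_mul, Real.norm_eq_abs, abs_of_pos ht0]
    nlinarith [mul_le_mul_of_nonneg_left hcr (le_of_lt ht0),
      mul_lt_mul_of_pos_left hlt (mul_pos ht0 ht0)]
  have hraypt : ∀ z : E, z ≠ 0 → ∃ t : ℝ, 0 < t ∧ t • z ∈ Ω₂ := by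
    intro z hz
    obtain ⟨t, ht, hbig⟩ := nehari_aux_raybig hI hsup hIz hz
    refine ⟨t, ht, ?_⟩
    rw [hOm2char]
    refine ⟨smul_ne_zero (ne_of_gt ht) hz, ?_⟩
    rw [norm_smul, map_smul, smul_eq_mul, Real.norm_eq_abs, abs_of_pos ht]
    nlinarith [mul_lt_mul_of_pos_left hbig ht]
  have hNne : N.Nonempty := by
    obtain ⟨z, hz⟩ := exists_ne (0 : E)
    obtain ⟨t, ht, hbig⟩ := nehari_aux_raybig hI hsup hIz hz
    obtain ⟨s, hs, hval⟩ := nehari_aux_pt hI hzero hmono hz ht hbig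
    exact ⟨s • z, (hsmulN z hz s hs.1).2 hval⟩
  have hNd : ∀ x ∈ N, d ≤ ‖x‖ := by
    intro x hx
    by_contra hcon
    push_neg at hcon
    obtain ⟨hx0, heq⟩ := (hmemN x).1 hx
    exact absurd heq (hsmall x hx0 hcon).ne'
  have hunion : Ω₁ ∪ Ω₂ = Nᶜ := by
    ext x
    simp only [hOm1_def, hOm2_def, Set.mem_union, Set.mem_setOf_eq, Set.mem_compl_iff]
    constructor
    · rintro (h | h) <;> exact h.1
    · intro h
      by_cases hc : ∃ s ∈ Set.Icc (0:ℝ) 1, s • x ∈ N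
      · exact Or.inr ⟨h, hc⟩
      · push_neg at hc
        exact Or.inl ⟨h, hc⟩
  have hdisj : Disjoint Ω₁ Ω₂ := by
    rw [Set.disjoint_left]
    rintro x ⟨-, h1⟩ ⟨-, s, hs, hsN⟩
    exact h1 s hs hsN
  have h0Om1 : (0 : E) ∈ Ω₁ := ⟨h0N, fun s _ => by rw [smul_zero]; exact h0N⟩
  have hOm1scale : ∀ x ∈ Ω₁, ∀ t ∈ Set.Icc (0:ℝ) 1, t • x ∈ Ω₁ := by
    rintro x ⟨hxN, hxseg⟩ t ht
    refine ⟨hxseg t ht, fun s hs => ?_⟩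
    rw [smul_smul]
    exact hxseg (s * t) ⟨mul_nonneg hs.1 ht.1, by nlinarith [hs.1, hs.2, ht.1, ht.2]⟩
  have hpcOm1 : IsPathConnected Ω₁ := by
    refine ⟨0, h0Om1, ?_⟩
    intro x hx
    refine ⟨⟨⟨fun t => ((t : ℝ)) • x, continuous_subtype_val.smul continuous_const⟩,
      ?_, ?_⟩, ?_⟩
    · show ((0 : unitInterval) : ℝ) • x = 0
      norm_num
    · show ((1 : unitInterval) : ℝ) • x = x
      norm_num
    · intro t
      exact hOm1scale x hx (t : ℝ) ⟨t.2.1, t.2.2⟩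
  have hseg : ∀ (x : E) (T : ℝ), 1 ≤ T → (∀ t ∈ Set.Icc (1:ℝ) T, t • x ∈ Ω₂) →
      JoinedIn Ω₂ x (T • x) := by
    intro x T hT h
    have hcont : Continuous fun t : unitInterval => ((1 : ℝ) + (T - 1) * (t : ℝ)) • x :=
      (continuous_const.add (continuous_const.mul continuous_subtype_val)).smul continuous_const
    refine ⟨⟨⟨fun t => ((1 : ℝ) + (T - 1) * (t : ℝ)) • x, hcont⟩, ?_, ?_⟩, ?_⟩
    · show ((1 : ℝ) + (T - 1) * ((0 : unitInterval) : ℝ)) • x = x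
      norm_num
    · show ((1 : ℝ) + (T - 1) * ((1 : unitInterval) : ℝ)) • x = T • x
      norm_num
    · intro t
      refine h _ ⟨?_, ?_⟩
      · nlinarith [t.2.1, t.2.2]
      · nlinarith [t.2.1, t.2.2]
  have hOm2ne : Ω₂.Nonempty := by
    obtain ⟨z, hz⟩ := exists_ne (0 : E)
    obtain ⟨t, _, htOm⟩ := hraypt z hz
    exact ⟨t • z, htOm⟩
  have hjoin2 : ∀ x ∈ Ω₂, ∀ y ∈ Ω₂, JoinedIn Ω₂ x y := by
    intro x hx y hy
    have hx0 : x ≠ 0 := ((hOm2char x).1 hx).1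
    have hy0 : y ≠ 0 := ((hOm2char y).1 hy).1
    have hrank : 1 < Module.rank ℝ E := lt_of_lt_of_le (by norm_num) hdim
    have hpc := isPathConnected_compl_singleton_of_one_lt_rank hrank (0 : E)
    obtain ⟨γ, hγ⟩ := hpc.joinedIn x (by simpa using hx0) y (by simpa using hy0)
    have hKcomp : IsCompact (Set.range γ) := isCompact_range γ.continuous
    obtain ⟨R, hR⟩ := isBounded_iff_forall_norm_le.mp hKcomp.isBounded
    have hKw : IsCompact (toWeakSpace ℝ E '' Set.range γ) := by
      have h1 : toWeakSpace ℝ E '' Set.range γ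
          = Set.range fun t => toWeakSpaceCLM ℝ E (γ t) := by
        rw [← Set.range_comp]; rfl
      rw [h1]
      exact isCompact_range ((toWeakSpaceCLM ℝ E).continuous.comp γ.continuous)
    obtain ⟨s₀, hs₀⟩ := hsup (Set.range γ) (fun w hw => by
        obtain ⟨t, rfl⟩ := hw
        simpa using hγ t) hKw (R ^ 2 / 2 + 1)
    set T : ℝ := max s₀ 1 with hT_def
    have hT1 : (1 : ℝ) ≤ T := le_max_right _ _
    have hT0 : (0 : ℝ) < T := lt_of_lt_of_le one_pos hT1
    have hTmem : ∀ t : unitInterval, T • γ t ∈ Ω₂ := by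
      intro t
      have hzne : γ t ≠ 0 := by simpa using hγ t
      rw [hOm2char]
      refine ⟨smul_ne_zero (ne_of_gt hT0) hzne, ?_⟩
      by_contra hcontra
      push_neg at hcontra
      have hkey : I' (T • γ t) (γ t) ≤ T * ‖γ t‖ ^ 2 := by
        rw [map_smul, smul_eq_mul, norm_smul, Real.norm_eq_abs, abs_of_pos hT0] at hcontra
        nlinarith [hcontra, hT0]
      have hupper := nehari_aux_upper hI (γ t) (‖γ t‖ ^ 2) (a := 0) (b := T)
        (le_of_lt hT0) ?_
      · rw [zero_smul, hIz] at hupper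
        have hlow := hs₀ T (le_max_left _ _) (γ t) ⟨t, rfl⟩
        rw [le_div_iff₀ (by positivity)] at hlow
        have hzR : ‖γ t‖ ≤ R := hR (γ t) ⟨t, rfl⟩
        nlinarith [pow_pos hT0 2, norm_nonneg (γ t),
          mul_le_mul hzR hzR (norm_nonneg (γ t)) (le_trans (norm_nonneg (γ t)) hzR),
          mul_pos (pow_pos hT0 2) (pow_pos hT0 2)]
      · intro u hu
        have hcr := nehari_aux_cross hmono hzne hu.1 (le_of_lt hu.2)
        nlinarith [hcr, mul_le_mul_of_nonneg_right hkey (le_of_lt hu.1), hT0]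
    have hJ1 : JoinedIn Ω₂ x (T • x) := hseg x T hT1 (fun t ht => hOm2ray x hx t ht.1)
    have hJ3 : JoinedIn Ω₂ y (T • y) := hseg y T hT1 (fun t ht => hOm2ray y hy t ht.1)
    have hJ2 : JoinedIn Ω₂ (T • x) (T • y) := by
      refine ⟨γ.map (f := fun z : E => T • z) (continuous_const_smul T), ?_⟩
      intro t
      exact hTmem t
    exact (hJ1.trans hJ2).trans hJ3.symm
  have hpcOm2 : IsPathConnected Ω₂ := by
    obtain ⟨w, hw⟩ := hOm2ne
    exact ⟨w, hw, fun y hy => hjoin2 w hw y hy⟩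
  -- the two closed invariant sets
  have hIcont : Continuous I := nehari_aux_contI hI
  set Cs : Set E :=
    {x : E | ∀ s ∈ Set.Ioo (1:ℝ) 2, (s ^ 2 - 1)/2 * ‖x‖ ^ 2 ≤ I (s • x) - I x} with hC_def
  set Ds : Set E :=
    {x : E | ∀ s ∈ Set.Ioo (1/2 : ℝ) 1, I x - I (s • x) ≤ (1 - s ^ 2)/2 * ‖x‖ ^ 2} with hD_def
  have hCclosed : IsClosed Cs := by
    have heq : Cs = ⋂ s ∈ Set.Ioo (1:ℝ) 2,
        {x : E | (s ^ 2 - 1)/2 * ‖x‖ ^ 2 ≤ I (s • x) - I x} := by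
      ext x; simp [hC_def]
    rw [heq]
    refine isClosed_biInter fun s _ => isClosed_le (by fun_prop) ?_
    exact (hIcont.comp (continuous_const_smul s)).sub hIcont
  have hDclosed : IsClosed Ds := by
    have heq : Ds = ⋂ s ∈ Set.Ioo (1/2 : ℝ) 1,
        {x : E | I x - I (s • x) ≤ (1 - s ^ 2)/2 * ‖x‖ ^ 2} := by
      ext x; simp [hD_def]
    rw [heq]
    refine isClosed_biInter fun s _ => isClosed_le ?_ (by fun_prop)
    exact hIcont.sub (hIcont.comp (continuous_const_smul s))
  have hslope_right : ∀ x : E, x ∈ Cs → ‖x‖ ^ 2 ≤ I' x x := by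
    intro x hx
    have hd : HasDerivAt (fun s : ℝ => I (s • x)) (I' ((1:ℝ) • x) x) 1 :=
      nehari_aux_deriv hI x 1
    rw [one_smul] at hd
    have hm : Tendsto (slope (fun s : ℝ => I (s • x)) 1) (𝓝[>] (1:ℝ)) (𝓝 (I' x x)) :=
      (hasDerivAt_iff_tendsto_slope.mp hd).mono_left
        (nhdsWithin_mono _ fun t ht => ne_of_gt ht)
    have hg : Tendsto (fun s : ℝ => (s + 1)/2 * ‖x‖ ^ 2) (𝓝[>] (1:ℝ)) (𝓝 (‖x‖ ^ 2)) := by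
      have hc : ContinuousAt (fun s : ℝ => (s + 1)/2 * ‖x‖ ^ 2) 1 := by fun_prop
      have h2 := hc.tendsto.mono_left (nhdsWithin_le_nhds (s := Set.Ioi (1:ℝ)))
      norm_num at h2
      exact h2
    refine le_of_tendsto_of_tendsto hg hm ?_
    filter_upwards [Ioo_mem_nhdsGT (by norm_num : (1:ℝ) < 2)] with s hs
    have h := hx s hs
    rw [slope_def_field]
    have hs1 : 0 < s - 1 := by linarith [hs.1]
    rw [le_div_iff₀ hs1, one_smul]
    nlinarith [h]
  have hslope_left : ∀ x : E, x ∈ Ds → I' x x ≤ ‖x‖ ^ 2 := by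
    intro x hx
    have hd : HasDerivAt (fun s : ℝ => I (s • x)) (I' ((1:ℝ) • x) x) 1 :=
      nehari_aux_deriv hI x 1
    rw [one_smul] at hd
    have hm : Tendsto (slope (fun s : ℝ => I (s • x)) 1) (𝓝[<] (1:ℝ)) (𝓝 (I' x x)) :=
      (hasDerivAt_iff_tendsto_slope.mp hd).mono_left
        (nhdsWithin_mono _ fun t ht => ne_of_lt ht)
    have hg : Tendsto (fun s : ℝ => (s + 1)/2 * ‖x‖ ^ 2) (𝓝[<] (1:ℝ)) (𝓝 (‖x‖ ^ 2)) := by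
      have hc : ContinuousAt (fun s : ℝ => (s + 1)/2 * ‖x‖ ^ 2) 1 := by fun_prop
      have h2 := hc.tendsto.mono_left (nhdsWithin_le_nhds (s := Set.Iio (1:ℝ)))
      norm_num at h2
      exact h2
    refine le_of_tendsto_of_tendsto hm hg ?_
    filter_upwards [Ioo_mem_nhdsLT (by norm_num : (1/2:ℝ) < 1)] with s hs
    have h := hx s hs
    rw [slope_def_field]
    have hs1 : s - 1 < 0 := by linarith [hs.2]
    rw [div_le_iff_of_neg hs1, one_smul]
    nlinarith [h]
  have hOm1D : ∀ x ∈ Ω₁, x ∈ Ds := by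
    intro x hx
    by_cases hx0 : x = 0
    · subst hx0
      intro s hs
      simp
    · have hlt : I' x x < ‖x‖ ^ 2 := by
        rcases lt_trichotomy (I' x x) (‖x‖ ^ 2) with h | h | h
        · exact h
        · exact absurd ((hmemN x).2 ⟨hx0, h.symm⟩) hx.1
        · exact absurd ((hOm2char x).2 ⟨hx0, h⟩) fun h2 => Set.disjoint_left.mp hdisj hx h2
      intro s hs
      have hupper := nehari_aux_upper hI x (‖x‖ ^ 2) (a := s) (b := 1) (le_of_lt hs.2) ?_
      · rw [one_smul] at hupper
        nlinarith [hupper]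
      · intro t ht
        have ht0 : 0 < t := by
          have := hs.1; have := ht.1; linarith
        have hcr := nehari_aux_cross hmono hx0 ht0 (le_of_lt ht.2)
        rw [one_smul, mul_one] at hcr
        nlinarith [hcr, mul_le_mul_of_nonneg_right (le_of_lt hlt) (le_of_lt ht0)]
  have hDOm1 : ∀ x, x ∈ Ds → x ∉ N → x ∈ Ω₁ := by
    intro x hxD hxN
    by_cases hx0 : x = 0
    · subst hx0; exact h0Om1
    · have hle : I' x x ≤ ‖x‖ ^ 2 := hslope_left x hxD
      have hlt : I' x x < ‖x‖ ^ 2 :=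
        lt_of_le_of_ne hle fun h => hxN ((hmemN x).2 ⟨hx0, h.symm⟩)
      refine ⟨hxN, ?_⟩
      intro s hs hsN
      rcases eq_or_lt_of_le hs.1 with h0 | h0
      · rw [← h0, zero_smul] at hsN; exact h0N hsN
      rcases eq_or_lt_of_le hs.2 with h1 | h1
      · rw [h1, one_smul] at hsN; exact hxN hsN
      have hval : I' (s • x) x = ‖x‖ ^ 2 * s := (hsmulN x hx0 s h0).1 hsN
      have hcr := nehari_aux_cross hmono hx0 h0 (le_of_lt h1)
      rw [one_smul, mul_one, hval] at hcr
      have hge : ‖x‖ ^ 2 ≤ I' x x := le_of_mul_le_mul_right (by linarith) h0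
      linarith
  have hOm2C : ∀ x ∈ Ω₂, x ∈ Cs ∧ d ≤ ‖x‖ := by
    intro x hx
    obtain ⟨hx0, hlt⟩ := (hOm2char x).1 hx
    constructor
    · intro s hs
      have hlower := nehari_aux_lower hI x (‖x‖ ^ 2) (a := 1) (b := s) (le_of_lt hs.1) ?_
      · rw [one_smul] at hlower
        nlinarith [hlower]
      · intro t ht
        have ht1 : (1:ℝ) < t := ht.1
        have hcr := nehari_aux_cross hmono hx0 one_pos (le_of_lt ht1)
        rw [one_smul, mul_one] at hcr
        nlinarith [hcr, mul_le_mul_of_nonneg_left (le_of_lt hlt) (by linarith : (0:ℝ) ≤ t)]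
    · by_contra hcon
      push_neg at hcon
      exact absurd hlt (not_lt.2 (le_of_lt (hsmall x hx0 hcon)))
  have hCOm2 : ∀ x, x ∈ Cs → d ≤ ‖x‖ → x ∉ N → x ∈ Ω₂ := by
    intro x hxC hxd hxN
    have hx0 : x ≠ 0 := by
      intro h; rw [h, norm_zero] at hxd; linarith
    have hge : ‖x‖ ^ 2 ≤ I' x x := hslope_right x hxC
    exact (hOm2char x).2 ⟨hx0, lt_of_le_of_ne hge fun h => hxN ((hmemN x).2 ⟨hx0, h⟩)⟩
  have hnojoin : ∀ x ∈ Ω₁, ∀ y ∈ Ω₂, ¬ JoinedIn Nᶜ x y := by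
    intro x hx y hy hJ
    obtain ⟨γ, hγ⟩ := hJ
    set S : Set unitInterval := {t | γ t ∈ Ω₁} with hS_def
    have hSc : Sᶜ = {t | γ t ∈ Ω₂} := by
      ext t
      have hmem : γ t ∈ Ω₁ ∪ Ω₂ := by rw [hunion]; exact hγ t
      simp only [hS_def, Set.mem_compl_iff, Set.mem_setOf_eq]
      constructor
      · intro h
        rcases hmem with h1 | h2
        · exact absurd h1 h
        · exact h2
      · intro h h1
        exact Set.disjoint_left.mp hdisj h1 h
    have hSeq : S = γ ⁻¹' Ds := by
      ext t
      simp only [hS_def, Set.mem_setOf_eq, Set.mem_preimage]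
      constructor
      · exact fun h => hOm1D _ h
      · intro h
        exact hDOm1 _ h (hγ t)
    have hSceq : Sᶜ = γ ⁻¹' (Cs ∩ {w : E | d ≤ ‖w‖}) := by
      rw [hSc]
      ext t
      simp only [Set.mem_setOf_eq, Set.mem_preimage, Set.mem_inter_iff]
      constructor
      · intro h
        exact hOm2C _ h
      · rintro ⟨h1, h2⟩
        exact hCOm2 _ h1 h2 (hγ t)
    have hSclosed : IsClosed S := by
      rw [hSeq]; exact hDclosed.preimage γ.continuous
    have hScclosed : IsClosed Sᶜ := by
      rw [hSceq]
      exact (hCclosed.inter (isClosed_le continuous_const continuous_norm)).preimage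
        γ.continuous
    have hclopen : IsClopen S := ⟨hSclosed, isClosed_compl_iff.mp hScclosed⟩
    rcases isClopen_iff.mp hclopen with h | h
    · have h0 : (0 : unitInterval) ∈ S := by
        show γ 0 ∈ Ω₁
        rw [γ.source]
        exact hx
      rw [h] at h0
      exact h0
    · have h1 : (1 : unitInterval) ∈ S := h ▸ Set.mem_univ _
      have h2 : γ 1 ∈ Ω₁ := h1
      rw [γ.target] at h2
      exact Set.disjoint_left.mp hdisj h2 hy
  exact ⟨hNne, ⟨d, hd, hNd⟩, hunion, hdisj, hpcOm1, hpcOm2, hnojoin⟩
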